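/- arXiv:1910.12497 — 7 statements merged into one kernel-verified Lean document; each statement's English description precedes it below -/
import Mathlib

section
/- Let G be a finite abelian group and let (X_g)_{g∈G} be commuting indeterminates over ℂ. Then the group determinant, i.e. the determinant of the G×G matrix whose (g,h) entry is the variable X_{g·h⁻¹}, factors as the product over all characters χ of G of the linear forms ∑_{g∈G} χ(g)·X_g; that is, in the multivariate polynomial ring ℂ[(X_g)_{g∈G}] one has det(X_{gh⁻¹})_{g,h∈G} = ∏_{χ∈Ĝ} (∑_{g∈G} χ(g) X_g). -/
open Matrix MvPolynomial Finset

/-- **Dedekind–Frobenius factorization of the group determinant for abelian groups.**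
For a finite abelian group `G`, the determinant of the Frobenius matrix
`(X_{g h⁻¹})_{g,h}` of indeterminates factors as the product, over all characters
`χ : G →* ℂˣ`, of the linear forms `∑_g χ(g) X_g`. -/
theorem groupDeterminant_factorization_abelian
    (G : Type*) [CommGroup G] [Fintype G] [DecidableEq G]
    [Fintype (G →* ℂˣ)] :
    Matrix.det (Matrix.of fun g h : G => (MvPolynomial.X (g * h⁻¹) : MvPolynomial G ℂ)) =
      ∏ χ : G →* ℂˣ, ∑ g : G, MvPolynomial.C ((χ g : ℂˣ) : ℂ) * MvPolynomial.X g := by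
  classical
  haveI : NeZero ((Monoid.exponent G : ℕ) : ℂ) :=
    ⟨by exact_mod_cast Monoid.exponent_ne_zero_of_finite⟩
  obtain ⟨em⟩ := CommGroup.monoidHom_mulEquiv_of_hasEnoughRootsOfUnity G ℂ
  let e : (G →* ℂˣ) ≃ G := em.toEquiv
  set lam : (G →* ℂˣ) → MvPolynomial G ℂ := fun χ => ∑ g : G, C ((χ g : ℂˣ) : ℂ) * X g with hlam
  set M : Matrix (G →* ℂˣ) (G →* ℂˣ) (MvPolynomial G ℂ) :=
    Matrix.of fun χ ψ : (G →* ℂˣ) => (X (e χ * (e ψ)⁻¹) : MvPolynomial G ℂ) with hM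
  set U : Matrix (G →* ℂˣ) (G →* ℂˣ) (MvPolynomial G ℂ) :=
    Matrix.of fun χ ψ : (G →* ℂˣ) => (C ((χ (e ψ) : ℂˣ) : ℂ) : MvPolynomial G ℂ) with hU
  -- the key eigenvector relation
  have key : U * M = Matrix.diagonal lam * U := by
    refine Matrix.ext fun χ ψ => ?_
    rw [Matrix.mul_apply, Matrix.diagonal_mul, hU, hM, hlam]
    simp only [Matrix.of_apply]
    have step1 : ∑ j : (G →* ℂˣ), C ((χ (e j) : ℂˣ) : ℂ) * X (e j * (e ψ)⁻¹)
        = ∑ g : G, C ((χ g : ℂˣ) : ℂ) * X (g * (e ψ)⁻¹) :=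
      Fintype.sum_equiv e _ _ (fun j => rfl)
    rw [step1, Finset.sum_mul]
    refine (Fintype.sum_equiv (Equiv.mulRight (e ψ)) _ _ fun k => ?_).symm
    simp only [Equiv.coe_mulRight, mul_inv_cancel_right, _root_.map_mul, Units.val_mul]
    ring
  -- character table over ℂ and nonvanishing of its determinant
  set U₀ : Matrix (G →* ℂˣ) (G →* ℂˣ) ℂ := Matrix.of fun χ ψ : (G →* ℂˣ) => ((χ (e ψ) : ℂˣ) : ℂ) with hU₀
  set W₀ : Matrix (G →* ℂˣ) (G →* ℂˣ) ℂ := Matrix.of fun ψ χ : (G →* ℂˣ) => (((χ (e ψ))⁻¹ : ℂˣ) : ℂ) with hW₀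
  have orth : U₀ * W₀ = (Fintype.card G : ℂ) • (1 : Matrix (G →* ℂˣ) (G →* ℂˣ) ℂ) := by
    refine Matrix.ext fun χ χ' => ?_
    rw [Matrix.mul_apply, hU₀, hW₀]
    simp only [Matrix.of_apply, Matrix.smul_apply, Matrix.one_apply, smul_eq_mul]
    have step1 : ∑ ψ : (G →* ℂˣ), ((χ (e ψ) : ℂˣ) : ℂ) * (((χ' (e ψ))⁻¹ : ℂˣ) : ℂ)
        = ∑ g : G, ((Units.coeHom ℂ).comp ((χ * χ'⁻¹ : (G →* ℂˣ)) : G →* ℂˣ)) g := by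
      refine Fintype.sum_equiv e _ _ fun ψ => ?_
      simp only [MonoidHom.coe_comp, Function.comp_apply, Units.coeHom_apply,
        MonoidHom.mul_apply, MonoidHom.inv_apply, Units.val_mul,
        Units.val_inv_eq_inv_val]
    rw [step1]
    by_cases hcc : χ = χ'
    · subst hcc
      have h1 : (χ * χ⁻¹ : (G →* ℂˣ)) = 1 := mul_inv_cancel χ
      rw [if_pos rfl, h1]
      simp [Finset.card_univ]
    · rw [if_neg hcc, mul_zero]
      apply sum_hom_units_eq_zero
      intro hone
      apply hcc
      have h2 : (χ * χ'⁻¹ : (G →* ℂˣ)) = 1 := by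
        ext g
        have h := DFunLike.congr_fun hone g
        simp only [MonoidHom.coe_comp, Function.comp_apply, Units.coeHom_apply,
          MonoidHom.one_apply] at h
        simpa using h
      exact mul_inv_eq_one.mp h2
  have hdetU₀ : U₀.det ≠ 0 := by
    intro h0
    have h := congrArg Matrix.det orth
    rw [Matrix.det_mul, h0, zero_mul, Matrix.det_smul, Matrix.det_one, mul_one] at h
    exact (pow_ne_zero _ (by exact_mod_cast (Fintype.card_ne_zero :
      Fintype.card G ≠ 0) : (Fintype.card G : ℂ) ≠ 0)) h.symm
  have hUdet : U.det = C U₀.det := by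
    have hmap : U = U₀.map (C : ℂ →+* MvPolynomial G ℂ) := by
      refine Matrix.ext fun χ ψ => ?_
      simp [hU, hU₀]
    rw [hmap, ← RingHom.mapMatrix_apply, ← RingHom.map_det]
  have hUne : U.det ≠ 0 := by
    rw [hUdet]
    simpa using hdetU₀
  have hdet : U.det * M.det = (∏ χ : (G →* ℂˣ), lam χ) * U.det := by
    have h := congrArg Matrix.det key
    rwa [Matrix.det_mul, Matrix.det_mul, Matrix.det_diagonal] at h
  have hMdet : M.det = ∏ χ : (G →* ℂˣ), lam χ := by
    rw [mul_comm U.det M.det] at hdet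
    exact mul_right_cancel₀ hUne hdet
  have hMA : M = (Matrix.of fun g h : G =>
      (X (g * h⁻¹) : MvPolynomial G ℂ)).submatrix e e := rfl
  rw [hMA, Matrix.det_submatrix_equiv_self] at hMdet
  exact hMdet
end

section
/- Fix m ≥ 1 and let ℂ[Z] = ℂ[(z_{jl})_{1≤j,l≤m}] be the polynomial ring in the entries of an m×m matrix of variables. Let Ω = det(∂/∂z_{jl}) = ∑_{σ ∈ S_m} sign(σ) · ∏_{j=1}^m ∂/∂z_{jσ(j)} be the Cayley operator, a ℂ-linear endomorphism of ℂ[Z]. For A ∈ M_m(ℂ) and q ∈ ℂ[Z], let A⋆q be the polynomial obtained by substituting Z ↦ AᵀZ, i.e. replacing each variable z_{jl} by ∑_{k=1}^m A_{kj} z_{kl}. Then for every A ∈ M_m(ℂ) and every q ∈ ℂ[Z], Ω(A⋆q) = det(A) · (A⋆(Ω q)). In particular, if the rank of A is strictly less than m, then Ω(A⋆q) = 0 for all q ∈ ℂ[Z]. -/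
set_option synthInstance.maxHeartbeats 1000000
set_option maxHeartbeats 4000000


open MvPolynomial

/-- The formal partial derivatives commute pairwise. -/
lemma pderiv_apply_comm {σ : Type*} (i j : σ) (f : MvPolynomial σ ℂ) :
    pderiv i (pderiv j f) = pderiv j (pderiv i f) := by
  classical
  induction f using MvPolynomial.induction_on' with
  | monomial s a =>
      rcases eq_or_ne i j with rfl | hij
      · rfl
      · simp only [pderiv_monomial]
        rw [tsub_right_comm]
        congr 1
        rw [Finsupp.tsub_apply, Finsupp.tsub_apply, Finsupp.single_apply, Finsupp.single_apply,
          if_neg hij, if_neg (Ne.symm hij)]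
        simp only [Nat.sub_zero]
        ring
  | add p q hp hq => simp [hp, hq]

lemma pderiv_end_commute {σ : Type*} (i j : σ) :
    Commute ((pderiv i).toLinearMap : Module.End ℂ (MvPolynomial σ ℂ))
      (pderiv j).toLinearMap := by
  refine LinearMap.ext fun p => ?_
  simpa using pderiv_apply_comm i j p

/-- The Cayley operator `Ω = ∑_{σ ∈ S_m} sign σ · ∏_j ∂/∂z_{j σ(j)}` on the polynomial
ring `ℂ[(z_{jl})_{1 ≤ j,l ≤ m}]` in the entries of an `m × m` matrix of variables. -/
noncomputable def cayleyOmega (m : ℕ) :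
    Module.End ℂ (MvPolynomial (Fin m × Fin m) ℂ) :=
  ∑ σ : Equiv.Perm (Fin m),
    (Equiv.Perm.sign σ : ℤ) •
      Finset.univ.noncommProd
        (fun j : Fin m =>
          ((pderiv (j, σ j)).toLinearMap : Module.End ℂ (MvPolynomial (Fin m × Fin m) ℂ)))
        (fun _ _ _ _ _ => pderiv_end_commute _ _)

/-- Substitution `Z ↦ Aᵀ Z`: the algebra endomorphism of `ℂ[Z]` replacing each variable
`z_{jl}` by `∑_k A_{kj} z_{kl}`. -/
noncomputable def starAct {m : ℕ} (A : Matrix (Fin m) (Fin m) ℂ) :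
    MvPolynomial (Fin m × Fin m) ℂ →ₐ[ℂ] MvPolynomial (Fin m × Fin m) ℂ :=
  MvPolynomial.aeval fun p : Fin m × Fin m =>
    ∑ k : Fin m, MvPolynomial.C (A k p.1) * MvPolynomial.X (k, p.2)

section CayleyAux

open Finset

variable {m : ℕ}

/-- `∂/∂z_p` as a linear endomorphism. -/
noncomputable def cayleyDop (m : ℕ) (p : Fin m × Fin m) :
    Module.End ℂ (MvPolynomial (Fin m × Fin m) ℂ) :=
  (pderiv p).toLinearMap

/-- The conjugated operator `T_{jl} = ∑_i A_{ji} ∂/∂z_{il}`. -/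
noncomputable def cayleyCop (A : Matrix (Fin m) (Fin m) ℂ) (p : Fin m × Fin m) :
    Module.End ℂ (MvPolynomial (Fin m × Fin m) ℂ) :=
  ∑ i : Fin m, A p.1 i • cayleyDop m (i, p.2)

lemma cayleyDop_commute (p q : Fin m × Fin m) : Commute (cayleyDop m p) (cayleyDop m q) :=
  pderiv_end_commute p q

lemma cayleyCop_commute (A : Matrix (Fin m) (Fin m) ℂ) (p q : Fin m × Fin m) :
    Commute (cayleyCop A p) (cayleyCop A q) := by
  refine Commute.sum_left _ _ _ fun i _ => Commute.sum_right _ _ _ fun k _ => ?_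
  exact ((cayleyDop_commute (i, p.2) (k, q.2)).smul_left _).smul_right _

lemma pderiv_starAct_X (A : Matrix (Fin m) (Fin m) ℂ) (j l : Fin m) (v : Fin m × Fin m) :
    pderiv (j, l) (starAct A (X v)) = ∑ i : Fin m, A j i • starAct A (pderiv (i, l) (X v)) := by
  classical
  obtain ⟨v1, v2⟩ := v
  by_cases h : v2 = l
  · subst h
    simp [starAct, pderiv_X, Pi.single_apply, Prod.ext_iff, mul_ite, apply_ite,
      Finset.sum_ite_eq, Finset.sum_ite_eq', Algebra.smul_def, eq_comm]
  · simp [starAct, pderiv_X, Pi.single_apply, Prod.ext_iff, h, Ne.symm h, mul_ite, apply_ite]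

/-- Chain rule for the substitution `Z ↦ Aᵀ Z`. -/
lemma pderiv_starAct (A : Matrix (Fin m) (Fin m) ℂ) (j l : Fin m)
    (q : MvPolynomial (Fin m × Fin m) ℂ) :
    pderiv (j, l) (starAct A q) = ∑ i : Fin m, A j i • starAct A (pderiv (i, l) q) := by
  classical
  induction q using MvPolynomial.induction_on with
  | C a => simp [starAct]
  | add p q hp hq => simp [hp, hq, smul_add, Finset.sum_add_distrib]
  | mul_X p v hp =>
      rw [map_mul, pderiv_mul, hp, pderiv_starAct_X A j l v]
      have : ∀ i : Fin m,
          starAct A (pderiv (i, l) (p * X v)) =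
            starAct A (pderiv (i, l) p) * starAct A (X v)
              + starAct A p * starAct A (pderiv (i, l) (X v)) := by
        intro i; rw [pderiv_mul, map_add, map_mul, map_mul]
      simp only [this, smul_add, Finset.sum_add_distrib, smul_mul_assoc, mul_smul_comm,
        ← Finset.sum_mul, ← Finset.mul_sum]
      rw [Finset.sum_mul, Finset.mul_sum]
      simp [smul_mul_assoc, mul_smul_comm]

lemma cayleyDop_mul_starAct (A : Matrix (Fin m) (Fin m) ℂ) (p : Fin m × Fin m) :
    cayleyDop m p * (starAct A).toLinearMap = (starAct A).toLinearMap * cayleyCop A p := by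
  refine LinearMap.ext fun q => ?_
  obtain ⟨j, l⟩ := p
  simp only [Module.End.mul_apply, AlgHom.toLinearMap_apply, cayleyDop, cayleyCop,
    LinearMap.coe_comp, LinearMap.sum_apply, LinearMap.smul_apply, map_sum, map_smul]
  simpa using pderiv_starAct A j l q

/-- Conjugating a `noncommProd` past a fixed element. -/
lemma noncommProd_conj {M : Type*} [Monoid M] {ι : Type*} (S : M) {f g : ι → M}
    (h : ∀ i, f i * S = S * g i) (s : Finset ι) :
    ∀ (cf : (↑s : Set ι).Pairwise (Function.onFun Commute f))
      (cg : (↑s : Set ι).Pairwise (Function.onFun Commute g)),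
      s.noncommProd f cf * S = S * s.noncommProd g cg := by
  classical
  induction s using Finset.induction_on with
  | empty => simp
  | @insert a s ha ih =>
      intro cf cg
      rw [Finset.noncommProd_insert_of_notMem _ _ _ cf ha,
        Finset.noncommProd_insert_of_notMem _ _ _ cg ha, mul_assoc,
        ih (cf.mono (Finset.coe_subset.mpr (Finset.subset_insert a s)))
          (cg.mono (Finset.coe_subset.mpr (Finset.subset_insert a s))), ← mul_assoc, h a,
        mul_assoc]

/-- The (commutative) subalgebra of endomorphisms generated by the partial derivatives. -/
noncomputable def cayleyRsub (m : ℕ) :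
    Subalgebra ℂ (Module.End ℂ (MvPolynomial (Fin m × Fin m) ℂ)) :=
  Algebra.adjoin ℂ (Set.range (cayleyDop m))

noncomputable instance (m : ℕ) : CommRing (cayleyRsub m) :=
  Algebra.adjoinCommRingOfComm ℂ
    (by rintro _ ⟨p, rfl⟩ _ ⟨q, rfl⟩; exact (cayleyDop_commute p q).eq)

noncomputable def cayleyDel (m : ℕ) (p : Fin m × Fin m) : cayleyRsub m :=
  ⟨cayleyDop m p, Algebra.subset_adjoin ⟨p, rfl⟩⟩

noncomputable def cayleyTel (A : Matrix (Fin m) (Fin m) ℂ) (p : Fin m × Fin m) : cayleyRsub m :=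
  ∑ i : Fin m, A p.1 i • cayleyDel m (i, p.2)

lemma cayleyTel_val (A : Matrix (Fin m) (Fin m) ℂ) (p : Fin m × Fin m) :
    ((cayleyRsub m).val (cayleyTel A p)) = cayleyCop A p := by
  simp [cayleyTel, cayleyCop, cayleyDel]

/-- `val` of a finite product in the subalgebra as a `noncommProd` in `End`. -/
lemma val_prod (g : Fin m → cayleyRsub m) (cg) :
    (cayleyRsub m).val (∏ i : Fin m, g i) =
      Finset.univ.noncommProd (fun i => (cayleyRsub m).val (g i)) cg := by
  rw [← Finset.noncommProd_eq_prod]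
  exact Finset.map_noncommProd _ _ _ _

lemma cayleyOmega_eq_det (m : ℕ) :
    cayleyOmega m =
      (cayleyRsub m).val (Matrix.of fun j l : Fin m => cayleyDel m (l, j)).det := by
  rw [Matrix.det_apply, map_sum]
  refine Finset.sum_congr rfl fun σ _ => ?_
  rw [Units.smul_def, map_zsmul, val_prod _
    (fun a _ b _ _ => (cayleyDop_commute (a, σ a) (b, σ b))
      )]
  rfl

lemma cop_sum_eq_det (A : Matrix (Fin m) (Fin m) ℂ) :
    ∑ σ : Equiv.Perm (Fin m), (Equiv.Perm.sign σ : ℤ) •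
        Finset.univ.noncommProd (fun j : Fin m => cayleyCop A (j, σ j))
          (fun a _ b _ _ => cayleyCop_commute A (a, σ a) (b, σ b)) =
      (cayleyRsub m).val (Matrix.of fun j l : Fin m => cayleyTel A (l, j)).det := by
  rw [Matrix.det_apply, map_sum]
  refine Finset.sum_congr rfl fun σ _ => ?_
  rw [Units.smul_def, map_zsmul]
  congr 1
  rw [val_prod _ (fun a _ b _ _ => by
      simpa [Function.onFun, cayleyTel_val] using cayleyCop_commute A (a, σ a) (b, σ b))]
  exact (Finset.noncommProd_congr rfl (fun x _ => cayleyTel_val A (x, σ x)) _).symm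

end CayleyAux

section CayleyMain

open Finset in
lemma cayleyOmega_mul_starAct_toLinearMap {m : ℕ} (A : Matrix (Fin m) (Fin m) ℂ) :
    cayleyOmega m * (starAct A).toLinearMap =
      A.det • ((starAct A).toLinearMap * cayleyOmega m) := by
  classical
  set S' := (starAct A).toLinearMap
  have hc : ∀ σ : Equiv.Perm (Fin m),
      (Finset.univ : Finset (Fin m)).noncommProd
          (fun j => (pderiv (j, σ j)).toLinearMap :
            Fin m → Module.End ℂ (MvPolynomial (Fin m × Fin m) ℂ))
          (fun _ _ _ _ _ => pderiv_end_commute _ _) * S' =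
        S' * (Finset.univ : Finset (Fin m)).noncommProd
          (fun j => cayleyCop A (j, σ j))
          (fun a _ b _ _ => cayleyCop_commute A (a, σ a) (b, σ b)) := fun σ =>
    noncommProd_conj S' (fun j => cayleyDop_mul_starAct A (j, σ j)) Finset.univ _ _
  calc cayleyOmega m * S'
      = ∑ σ : Equiv.Perm (Fin m), (Equiv.Perm.sign σ : ℤ) •
          (S' * Finset.univ.noncommProd (fun j => cayleyCop A (j, σ j))
            (fun a _ b _ _ => cayleyCop_commute A (a, σ a) (b, σ b))) := by
        rw [cayleyOmega, Finset.sum_mul]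
        exact Finset.sum_congr rfl fun σ _ => by rw [smul_mul_assoc, hc σ]
    _ = S' * ∑ σ : Equiv.Perm (Fin m), (Equiv.Perm.sign σ : ℤ) •
          Finset.univ.noncommProd (fun j => cayleyCop A (j, σ j))
            (fun a _ b _ _ => cayleyCop_commute A (a, σ a) (b, σ b)) := by
        rw [Finset.mul_sum]
        exact Finset.sum_congr rfl fun σ _ => (mul_smul_comm _ _ _).symm
    _ = S' * (cayleyRsub m).val (Matrix.of fun j l : Fin m => cayleyTel A (l, j)).det := by
        rw [cop_sum_eq_det A]
    _ = A.det • (S' * cayleyOmega m) := by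
        have hmat : (Matrix.of fun j l : Fin m => cayleyTel A (l, j)) =
            (Matrix.of fun j l : Fin m => cayleyDel m (l, j)) *
              (Matrix.transpose A).map (algebraMap ℂ (cayleyRsub m)) := by
          ext j l : 1
          simp [Matrix.mul_apply, cayleyTel, Algebra.smul_def, mul_comm]
          exact Finset.sum_congr rfl fun x _ => mul_comm _ _
        rw [hmat]
        erw [Matrix.det_mul]
        rw [← RingHom.mapMatrix_apply]
        erw [← RingHom.map_det]
        rw [Matrix.det_transpose]
        erw [mul_comm _ ((algebraMap ℂ (cayleyRsub m)) A.det), ← Algebra.smul_def]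
        rw [map_smul, ← cayleyOmega_eq_det, mul_smul_comm]

theorem cayleyOmega_starAct' (m : ℕ) (hm : 1 ≤ m)
    (A : Matrix (Fin m) (Fin m) ℂ) (q : MvPolynomial (Fin m × Fin m) ℂ) :
    cayleyOmega m (starAct A q) = A.det • starAct A (cayleyOmega m q) ∧
      (A.rank < m → cayleyOmega m (starAct A q) = 0) := by
  have hmain : cayleyOmega m (starAct A q) = A.det • starAct A (cayleyOmega m q) := by
    have := LinearMap.congr_fun (cayleyOmega_mul_starAct_toLinearMap A) q
    simpa [Module.End.mul_apply] using this
  refine ⟨hmain, fun hrank => ?_⟩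
  have hdet : A.det = 0 := by
    by_contra hd
    have hu : IsUnit A := (Matrix.isUnit_iff_isUnit_det A).mpr (Ne.isUnit hd)
    have := Matrix.rank_of_isUnit A hu
    rw [Fintype.card_fin] at this
    omega
  rw [hmain, hdet, zero_smul]

end CayleyMain

/-- **Cayley's identity for the Ω-process.** For every `A ∈ M_m(ℂ)` and every
`q ∈ ℂ[Z]`, `Ω(A⋆q) = det A · (A⋆(Ω q))`; in particular, if `rank A < m`,
then `Ω(A⋆q) = 0`. -/


theorem cayleyOmega_starAct (m : ℕ) (hm : 1 ≤ m)
    (A : Matrix (Fin m) (Fin m) ℂ) (q : MvPolynomial (Fin m × Fin m) ℂ) :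
    cayleyOmega m (starAct A q) = A.det • starAct A (cayleyOmega m q) ∧
      (A.rank < m → cayleyOmega m (starAct A q) = 0) :=
  cayleyOmega_starAct' m hm A q
end

section
/- Fix m ≥ 1 and let ℂ[Z] = ℂ[(z_{jl})_{1≤j,l≤m}]. Let Ω = ∑_{σ ∈ S_m} sign(σ) ∏_{j=1}^m ∂/∂z_{jσ(j)} be the Cayley operator and, for 1 ≤ j,l ≤ m, let Δ_{jl} = ∑_{h=1}^m z_{jh} ∂/∂z_{lh} be the polarization operator, both ℂ-linear endomorphisms of ℂ[Z]. Then for every j ≠ l, the operators Ω and Δ_{jl} commute: Ω ∘ Δ_{jl} = Δ_{jl} ∘ Ω on ℂ[Z]. -/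
open MvPolynomial

/-- The polarization operator `Δ_{jl} = ∑_h z_{jh} ∂/∂z_{lh}` on `ℂ[Z]`. -/
noncomputable def polarization (m : ℕ) (j l : Fin m) :
    Module.End ℂ (MvPolynomial (Fin m × Fin m) ℂ) :=
  ∑ h : Fin m,
    (LinearMap.mulLeft ℂ (MvPolynomial.X (j, h)) : Module.End ℂ (MvPolynomial (Fin m × Fin m) ℂ)) *
      (pderiv (l, h)).toLinearMap

namespace CayleyAux
open Finset
variable {m : ℕ}

noncomputable def D (p : Fin m × Fin m) : Module.End ℂ (MvPolynomial (Fin m × Fin m) ℂ) :=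
  (pderiv p).toLinearMap

noncomputable def M (p : Fin m × Fin m) : Module.End ℂ (MvPolynomial (Fin m × Fin m) ℂ) :=
  LinearMap.mulLeft ℂ (MvPolynomial.X p)

lemma D_comm (p q : Fin m × Fin m) : Commute (D p) (D q) := pderiv_end_commute p q

lemma D_mul_M (p q : Fin m × Fin m) :
    D p * M q = M q * D p + if p = q then 1 else 0 := by
  refine LinearMap.ext fun f => ?_
  rcases eq_or_ne p q with rfl | h
  · simp [D, M, pderiv_mul]
  · simp [D, M, pderiv_mul, h]

noncomputable def P (τ : Fin m → Fin m) (s : Finset (Fin m)) :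
    Module.End ℂ (MvPolynomial (Fin m × Fin m) ℂ) :=
  s.noncommProd (fun a => D (a, τ a)) (fun _ _ _ _ _ => D_comm _ _)

lemma D_comm_P (q : Fin m × Fin m) (τ : Fin m → Fin m) (s : Finset (Fin m)) :
    Commute (D q) (P τ s) :=
  Finset.noncommProd_commute _ _ _ _ (fun _ _ => D_comm _ _)

lemma P_insert (τ : Fin m → Fin m) {a : Fin m} {s : Finset (Fin m)} (h : a ∉ s) :
    P τ (insert a s) = D (a, τ a) * P τ s :=
  Finset.noncommProd_insert_of_notMem _ _ _ _ h

lemma P_mul_M (τ : Fin m → Fin m) (s : Finset (Fin m)) (j h : Fin m) :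
    P τ s * M (j, h) =
      M (j, h) * P τ s + (if j ∈ s ∧ τ j = h then P τ (s.erase j) else 0) := by
  classical
  induction s using Finset.induction_on with
  | empty =>
    simp [P]
    exact (Commute.one_left (M (j, h))).eq
  | @insert a s ha ih =>
    rw [P_insert τ ha, mul_assoc, ih, mul_add, ← mul_assoc, D_mul_M, add_mul, mul_assoc]
    rcases eq_or_ne a j with rfl | haj
    · have hns : ¬ (a ∈ s ∧ τ a = h) := fun hc => ha hc.1
      rw [if_neg hns, mul_zero, add_zero, Finset.erase_insert ha]
      rcases eq_or_ne (τ a) h with rfl | hh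
      · rw [if_pos rfl, one_mul, if_pos ⟨Finset.mem_insert_self a s, rfl⟩]
      · rw [if_neg (by simp [Prod.ext_iff, hh] : ((a, τ a) : Fin m × Fin m) ≠ (a, h)),
          zero_mul, add_zero, if_neg (fun hc => hh hc.2), add_zero]
    · rw [if_neg (by simp [Prod.ext_iff, haj] : ((a, τ a) : Fin m × Fin m) ≠ (j, h)),
        zero_mul, add_zero]
      rcases em (j ∈ s ∧ τ j = h) with hc | hc
      · have hanotin : a ∉ s.erase j := fun hmem => ha (Finset.mem_of_mem_erase hmem)
        rw [if_pos hc, if_pos ⟨Finset.mem_insert_of_mem hc.1, hc.2⟩,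
          Finset.erase_insert_of_ne haj, P_insert τ hanotin]
      · have hj' : ¬ (j ∈ insert a s ∧ τ j = h) := by
          rintro ⟨hmem, hτ⟩
          rcases Finset.mem_insert.1 hmem with rfl | hmem'
          · exact haj rfl
          · exact hc ⟨hmem', hτ⟩
        rw [if_neg hc, if_neg hj', mul_zero, add_zero]
end CayleyAux

namespace CayleyAux
open Finset
variable {m : ℕ}

noncomputable def polarization' (m : ℕ) (j l : Fin m) :
    Module.End ℂ (MvPolynomial (Fin m × Fin m) ℂ) :=
  ∑ h : Fin m,
    (LinearMap.mulLeft ℂ (MvPolynomial.X (j, h)) : Module.End ℂ (MvPolynomial (Fin m × Fin m) ℂ)) *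
      (pderiv (l, h)).toLinearMap

lemma polar_eq (j l : Fin m) : polarization' m j l = ∑ h : Fin m, M (j, h) * D (l, h) := rfl

lemma P_mul_polar (τ : Equiv.Perm (Fin m)) (j l : Fin m) :
    P ⇑τ univ * polarization' m j l =
      polarization' m j l * P ⇑τ univ + P ⇑τ (univ.erase j) * D (l, τ j) := by
  classical
  rw [polar_eq, Finset.mul_sum, Finset.sum_mul]
  have step : ∀ h : Fin m, P ⇑τ univ * (M (j, h) * D (l, h)) =
      M (j, h) * D (l, h) * P ⇑τ univ +
        (if τ j = h then P ⇑τ (univ.erase j) * D (l, h) else 0) := by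
    intro h
    rw [← mul_assoc, P_mul_M]
    simp only [Finset.mem_univ, true_and]
    rw [add_mul, mul_assoc, ← (D_comm_P (l, h) ⇑τ univ).eq, ← mul_assoc, ite_mul, zero_mul]
  rw [Finset.sum_congr rfl (fun h _ => step h), Finset.sum_add_distrib,
    Finset.sum_ite_eq univ (τ j) (fun h => P ⇑τ (univ.erase j) * D (l, h)),
    if_pos (Finset.mem_univ _)]

lemma op_eq (σ : Equiv.Perm (Fin m)) (j l : Fin m) (hjl : j ≠ l) :
    P ⇑(σ * Equiv.swap j l) (univ.erase j) * D (l, (σ * Equiv.swap j l) j)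
      = P ⇑σ (univ.erase j) * D (l, σ j) := by
  classical
  have hl : l ∈ univ.erase j := Finset.mem_erase.2 ⟨Ne.symm hjl, Finset.mem_univ l⟩
  set s := (univ.erase j).erase l with hs
  have hrec : univ.erase j = insert l s := (Finset.insert_erase hl).symm
  have hnot : l ∉ s := Finset.notMem_erase l _
  have hPs : P ⇑(σ * Equiv.swap j l) s = P ⇑σ s := by
    refine Finset.noncommProd_congr rfl (fun x hx => ?_) _
    have hxl : x ≠ l := Finset.ne_of_mem_erase hx
    have hxj : x ≠ j := Finset.ne_of_mem_erase (Finset.mem_of_mem_erase hx)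
    have : Equiv.swap j l x = x := Equiv.swap_apply_of_ne_of_ne hxj hxl
    simp [Equiv.Perm.mul_apply, this]
  have h1 : (σ * Equiv.swap j l) l = σ j := by
    simp [Equiv.Perm.mul_apply, Equiv.swap_apply_right]
  have h2 : (σ * Equiv.swap j l) j = σ l := by
    simp [Equiv.Perm.mul_apply, Equiv.swap_apply_left]
  rw [h2, hrec, P_insert _ hnot, P_insert _ hnot, hPs, h1]
  rw [(D_comm_P (l, σ j) ⇑σ s).eq, mul_assoc, (D_comm (l, σ j) (l, σ l)).eq,
    ← mul_assoc, ← (D_comm_P (l, σ l) ⇑σ s).eq]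

lemma sum_Q_zero (j l : Fin m) (hjl : j ≠ l) :
    ∑ σ : Equiv.Perm (Fin m),
      ((Equiv.Perm.sign σ : ℤ) : ℤ) • (P ⇑σ (univ.erase j) * D (l, σ j)) = 0 := by
  classical
  set F := fun σ : Equiv.Perm (Fin m) =>
    ((Equiv.Perm.sign σ : ℤ) : ℤ) • (P ⇑σ (univ.erase j) * D (l, σ j)) with hF
  have hinv : ∀ σ, F (σ * Equiv.swap j l) = - F σ := by
    intro σ
    have hsign : ((Equiv.Perm.sign (σ * Equiv.swap j l) : ℤ)) = -(Equiv.Perm.sign σ : ℤ) := by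
      rw [Equiv.Perm.sign_mul, Equiv.Perm.sign_swap hjl]
      push_cast
      ring
    simp only [hF, hsign, op_eq σ j l hjl, neg_smul]
  have hS : ∑ σ, F σ = - ∑ σ, F σ := by
    conv_lhs => rw [← Equiv.sum_comp (Equiv.mulRight (Equiv.swap j l)) F]
    simp only [Equiv.coe_mulRight, hinv, Finset.sum_neg_distrib]
  have h2 : (2 : ℂ) • ∑ σ, F σ = 0 := by
    rw [two_smul]
    nth_rewrite 1 [hS]
    simp
  rcases smul_eq_zero.1 h2 with h | h
  · exact absurd h two_ne_zero
  · exact h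

end CayleyAux

/-- For `j ≠ l`, the Cayley operator `Ω` commutes with the polarization operator
`Δ_{jl}`. -/
theorem cayleyOmega_commute_polarization (m : ℕ) (hm : 1 ≤ m)
    (j l : Fin m) (hjl : j ≠ l) :
    cayleyOmega m * polarization m j l = polarization m j l * cayleyOmega m := by
  classical
  have hΩ : cayleyOmega m =
      ∑ σ : Equiv.Perm (Fin m), ((Equiv.Perm.sign σ : ℤ) : ℤ) • CayleyAux.P ⇑σ Finset.univ := rfl
  have hΔ : polarization m j l = CayleyAux.polarization' m j l := rfl
  rw [hΩ, hΔ, Finset.sum_mul, Finset.mul_sum]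
  simp only [smul_mul_assoc, mul_smul_comm, CayleyAux.P_mul_polar, smul_add]
  rw [Finset.sum_add_distrib, CayleyAux.sum_Q_zero j l hjl, add_zero]
end

section
/- Fix m ≥ 1 and let ℂ[Z] = ℂ[(z_{jl})_{1≤j,l≤m}], with Cayley operator Ω = ∑_{σ ∈ S_m} sign(σ) ∏_{j=1}^m ∂/∂z_{jσ(j)} and polarization operators Δ_{jl} = ∑_{h=1}^m z_{jh} ∂/∂z_{lh}. Fix l with 1 ≤ l ≤ m, and let q ∈ ℂ[Z] be a polynomial depending only on the variables of the l-th row, i.e. only on z_{l1}, z_{l2}, …, z_{lm}. Then for every j ≠ l and every positive integer r, the polynomial Δ_{jl}^r(q) lies in the kernel of Ω: Ω(Δ_{jl}^r q) = 0. -/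
open MvPolynomial

section Aux

variable {m : ℕ}

lemma polarization_apply (j l : Fin m) (p : MvPolynomial (Fin m × Fin m) ℂ) :
    polarization m j l p = ∑ h : Fin m, MvPolynomial.X (j, h) * pderiv (l, h) p := by
  simp [polarization, LinearMap.sum_apply, Module.End.mul_apply]

/-- Derivatives in a row other than `l` kill polynomials depending only on row `l`. -/
lemma pderiv_rename_row_eq_zero {k l : Fin m} (hkl : k ≠ l) (h : Fin m)
    (q₀ : MvPolynomial (Fin m) ℂ) :
    pderiv (k, h) (MvPolynomial.rename (fun i : Fin m => (l, i)) q₀) = 0 := by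
  induction q₀ using MvPolynomial.induction_on with
  | C a => simp
  | add p q hp hq => simp [hp, hq]
  | mul_X p i hp =>
      rw [map_mul, pderiv_mul, hp, MvPolynomial.rename_X,
        pderiv_X_of_ne (by simp [Ne, Prod.ext_iff, hkl.symm])]
      simp

/-- Basic commutation relation between a partial derivative and a polarization operator. -/
lemma pderiv_mul_polarization (j l : Fin m) (a b : Fin m) :
    ((pderiv (a, b)).toLinearMap : Module.End ℂ (MvPolynomial (Fin m × Fin m) ℂ)) *
        polarization m j l =
      polarization m j l * (pderiv (a, b)).toLinearMap +
        (if a = j then ((pderiv (l, b)).toLinearMap :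
            Module.End ℂ (MvPolynomial (Fin m × Fin m) ℂ)) else 0) := by
  refine LinearMap.ext fun p => ?_
  simp only [LinearMap.add_apply, Module.End.mul_apply, polarization_apply, map_sum,
    Derivation.coeFn_coe, apply_ite (fun f : Module.End ℂ (MvPolynomial (Fin m × Fin m) ℂ) => f p),
    LinearMap.zero_apply]
  have : ∀ h : Fin m,
      pderiv (a, b) (MvPolynomial.X (j, h) * pderiv (l, h) p) =
        MvPolynomial.X (j, h) * pderiv (l, h) (pderiv (a, b) p) +
          (if (j, h) = (a, b) then pderiv (l, h) p else 0) := by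
    intro h
    rw [pderiv_mul, pderiv_apply_comm]
    classical
    rcases eq_or_ne ((j, h) : Fin m × Fin m) (a, b) with he | he
    · rw [if_pos he, ← he, pderiv_X_self]; ring
    · rw [if_neg he, pderiv_X_of_ne he]; ring
  rw [Finset.sum_congr rfl fun h _ => this h, Finset.sum_add_distrib]
  congr 1
  classical
  rcases eq_or_ne a j with rfl | haj
  · have heq : ∀ h : Fin m, (if ((a, h) : Fin m × Fin m) = (a, b) then pderiv (l, h) p else 0) =
        (if h = b then pderiv (l, h) p else 0) := by
      intro h
      congr 1
      simp [Prod.ext_iff]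
    rw [if_pos rfl, Finset.sum_congr rfl fun h _ => heq h, Finset.sum_ite_eq' Finset.univ b]
    simp
  · have : ∀ h : Fin m, ((j, h) : Fin m × Fin m) ≠ (a, b) := by
      intro h; simp [Prod.ext_iff, Ne.symm haj]
    simp [this, haj]

lemma polarization_commute_pderiv {j l : Fin m} {a b : Fin m} (haj : a ≠ j) :
    Commute (polarization m j l)
      ((pderiv (a, b)).toLinearMap : Module.End ℂ (MvPolynomial (Fin m × Fin m) ℂ)) := by
  have h := pderiv_mul_polarization j l a b
  rw [if_neg haj, add_zero] at h
  exact h.symm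

end Aux

/-- If `q` depends only on the variables `z_{l1}, …, z_{lm}` of the `l`-th row, then
for every `j ≠ l` and every `r > 0`, the polynomial `Δ_{jl}^r q` lies in the kernel of
the Cayley operator `Ω`. -/
theorem cayleyOmega_polarization_pow_row_eq_zero (m : ℕ) (hm : 1 ≤ m)
    (j l : Fin m) (hjl : j ≠ l) (r : ℕ) (hr : 0 < r)
    (q : MvPolynomial (Fin m × Fin m) ℂ)
    (hq : ∃ q₀ : MvPolynomial (Fin m) ℂ,
      q = MvPolynomial.rename (fun h : Fin m => (l, h)) q₀) :
    cayleyOmega m ((polarization m j l ^ r) q) = 0 := by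
  classical
  obtain ⟨q₀, rfl⟩ := hq
  set Δ : Module.End ℂ (MvPolynomial (Fin m × Fin m) ℂ) := polarization m j l with hΔ
  set D : Fin m × Fin m → Module.End ℂ (MvPolynomial (Fin m × Fin m) ℂ) :=
    fun p => (pderiv p).toLinearMap with hD
  have Dcomm : ∀ (a b : Fin m × Fin m), Commute (D a) (D b) :=
    fun a b => pderiv_end_commute a b
  -- the full product for a permutation σ
  set P : Equiv.Perm (Fin m) → Module.End ℂ (MvPolynomial (Fin m × Fin m) ℂ) :=
    fun σ => Finset.univ.noncommProd (fun k : Fin m => D (k, σ k))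
      (fun _ _ _ _ _ => Dcomm _ _) with hP
  -- the product over rows other than j
  set Q : Equiv.Perm (Fin m) → Module.End ℂ (MvPolynomial (Fin m × Fin m) ℂ) :=
    fun σ => (Finset.univ.erase j).noncommProd (fun k : Fin m => D (k, σ k))
      (fun _ _ _ _ _ => Dcomm _ _) with hQ
  -- the product over rows other than j and l
  set R : Equiv.Perm (Fin m) → Module.End ℂ (MvPolynomial (Fin m × Fin m) ℂ) :=
    fun σ => ((Finset.univ.erase j).erase l).noncommProd (fun k : Fin m => D (k, σ k))
      (fun _ _ _ _ _ => Dcomm _ _) with hR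
  have hPQ : ∀ σ : Equiv.Perm (Fin m), P σ = Q σ * D (j, σ j) := by
    intro σ
    exact (Finset.noncommProd_erase_mul Finset.univ (Finset.mem_univ j)
      (fun k : Fin m => D (k, σ k)) (fun _ _ _ _ _ => Dcomm _ _)).symm
  have hQR : ∀ σ : Equiv.Perm (Fin m), Q σ = R σ * D (l, σ l) := by
    intro σ
    exact (Finset.noncommProd_erase_mul (Finset.univ.erase j)
      (Finset.mem_erase.2 ⟨Ne.symm hjl, Finset.mem_univ l⟩)
      (fun k : Fin m => D (k, σ k)) (fun _ _ _ _ _ => Dcomm _ _)).symm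
  have hΔQ : ∀ σ : Equiv.Perm (Fin m), Commute Δ (Q σ) := by
    intro σ
    refine Finset.noncommProd_commute _ _ _ _ fun k hk => ?_
    exact polarization_commute_pderiv (Finset.ne_of_mem_erase hk)
  -- commutator of P σ with Δ
  have hPΔ : ∀ σ : Equiv.Perm (Fin m), P σ * Δ = Δ * P σ + Q σ * D (l, σ j) := by
    intro σ
    have h1 : D (j, σ j) * Δ = Δ * D (j, σ j) + D (l, σ j) := by
      have := pderiv_mul_polarization j l j (σ j)
      rw [if_pos rfl] at this
      exact this
    rw [hPQ σ, mul_assoc, h1, mul_add, ← mul_assoc, ← (hΔQ σ).eq, mul_assoc, ← hPQ σ]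
  -- the error terms cancel in pairs
  have hsum : ∑ σ : Equiv.Perm (Fin m),
      ((Equiv.Perm.sign σ : ℤ) • (Q σ * D (l, σ j))) = 0 := by
    refine Finset.sum_ninvolution (fun σ => σ * Equiv.swap j l) ?_ ?_ ?_ ?_
    · intro σ
      have hsign : (Equiv.Perm.sign (σ * Equiv.swap j l) : ℤ) =
          -(Equiv.Perm.sign σ : ℤ) := by
        rw [map_mul, Equiv.Perm.sign_swap hjl]
        simp
      have hval_j : (σ * Equiv.swap j l) j = σ l := by
        simp [Equiv.Perm.mul_apply, Equiv.swap_apply_left]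
      have hval_l : (σ * Equiv.swap j l) l = σ j := by
        simp [Equiv.Perm.mul_apply, Equiv.swap_apply_right]
      have hRconst : R (σ * Equiv.swap j l) = R σ := by
        refine Finset.noncommProd_congr rfl (fun k hk => ?_) _
        have hkj : k ≠ j := Finset.ne_of_mem_erase (Finset.mem_of_mem_erase hk)
        have hkl : k ≠ l := Finset.ne_of_mem_erase hk
        congr 2
        simp [Equiv.Perm.mul_apply, Equiv.swap_apply_of_ne_of_ne hkj hkl]
      have key : Q (σ * Equiv.swap j l) * D (l, (σ * Equiv.swap j l) j) =
          Q σ * D (l, σ j) := by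
        rw [hQR, hQR, hRconst, hval_j, hval_l, mul_assoc, mul_assoc,
          (Dcomm (l, σ j) (l, σ l)).eq]
      rw [key, hsign, neg_smul, add_neg_cancel]
    · intro σ _
      intro hcon
      have h1 : σ * Equiv.swap j l = σ * 1 := by rw [mul_one]; exact hcon
      have h2 := mul_left_cancel h1
      have h3 := congrArg (fun e : Equiv.Perm (Fin m) => e j) h2
      simp [Equiv.swap_apply_left] at h3
      exact hjl h3.symm
    · intro σ; exact Finset.mem_univ _
    · intro σ
      show σ * Equiv.swap j l * Equiv.swap j l = σ
      rw [mul_assoc, Equiv.swap_mul_self, mul_one]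
  -- Ω commutes with Δ
  have hcomm : Commute (cayleyOmega m) Δ := by
    unfold Commute SemiconjBy
    show cayleyOmega m * Δ = Δ * cayleyOmega m
    rw [cayleyOmega, Finset.sum_mul, Finset.mul_sum]
    calc ∑ σ : Equiv.Perm (Fin m), ((Equiv.Perm.sign σ : ℤ) • P σ) * Δ
        = ∑ σ : Equiv.Perm (Fin m), (((Equiv.Perm.sign σ : ℤ) • (Δ * P σ)) +
            ((Equiv.Perm.sign σ : ℤ) • (Q σ * D (l, σ j)))) := by
          refine Finset.sum_congr rfl fun σ _ => ?_
          rw [smul_mul_assoc, hPΔ σ, smul_add]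
      _ = ∑ σ : Equiv.Perm (Fin m), (Equiv.Perm.sign σ : ℤ) • (Δ * P σ) := by
          rw [Finset.sum_add_distrib, hsum, add_zero]
      _ = ∑ σ : Equiv.Perm (Fin m), Δ * ((Equiv.Perm.sign σ : ℤ) • P σ) := by
          refine Finset.sum_congr rfl fun σ _ => ?_
          rw [mul_smul_comm]
  -- Ω kills q
  have hΩq : cayleyOmega m (MvPolynomial.rename (fun h : Fin m => (l, h)) q₀) = 0 := by
    rw [cayleyOmega, LinearMap.sum_apply]
    refine Finset.sum_eq_zero fun σ _ => ?_
    rw [LinearMap.smul_apply]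
    have : P σ (MvPolynomial.rename (fun h : Fin m => (l, h)) q₀) = 0 := by
      rw [hPQ σ, Module.End.mul_apply]
      have h0 : (D (j, σ j)) (MvPolynomial.rename (fun h : Fin m => (l, h)) q₀) = 0 :=
        pderiv_rename_row_eq_zero hjl (σ j) q₀
      rw [h0, map_zero]
    show (Equiv.Perm.sign σ : ℤ) • (P σ) (MvPolynomial.rename (fun h : Fin m => (l, h)) q₀) = 0
    rw [this, smul_zero]
  have hcommr : Commute (cayleyOmega m) (Δ ^ r) := hcomm.pow_right r
  have : cayleyOmega m * Δ ^ r = Δ ^ r * cayleyOmega m := hcommr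
  calc cayleyOmega m ((Δ ^ r) (MvPolynomial.rename (fun h : Fin m => (l, h)) q₀))
      = (cayleyOmega m * Δ ^ r) (MvPolynomial.rename (fun h : Fin m => (l, h)) q₀) := rfl
    _ = (Δ ^ r * cayleyOmega m) (MvPolynomial.rename (fun h : Fin m => (l, h)) q₀) := by
        rw [this]
    _ = (Δ ^ r) (cayleyOmega m (MvPolynomial.rename (fun h : Fin m => (l, h)) q₀)) := rfl
    _ = 0 := by rw [hΩq, map_zero]
end

section
/- Let G be a finite group of order n, let Θ(G) = det(X_{gh⁻¹}) ∈ ℂ[(X_g)_{g∈G}] be its group determinant, and let a : G → ℂ. Then the adjugate of the Frobenius matrix M = (a_{gh⁻¹})_{g,h∈G} has (g,h) entry equal to (1/n) times the formal partial derivative ∂Θ(G)/∂X_{h g⁻¹} evaluated at the point (a_g)_{g∈G}; here the adjugate is the matrix satisfying M · adj(M) = det(M) · I. -/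
open Matrix MvPolynomial Finset

lemma my_pderiv_prod {σ R ι : Type*} [CommSemiring R] [DecidableEq ι] (w : σ) (s : Finset ι)
    (f : ι → MvPolynomial σ R) :
    pderiv w (∏ i ∈ s, f i) = ∑ i ∈ s, pderiv w (f i) * ∏ j ∈ s.erase i, f j := by
  induction s using Finset.induction_on with
  | empty => simp
  | insert a s ha ih =>
    rw [Finset.prod_insert ha, pderiv_mul, Finset.sum_insert ha, Finset.erase_insert ha, ih,
      Finset.mul_sum]
    congr 1
    refine Finset.sum_congr rfl fun i hi => ?_
    rw [Finset.erase_insert_of_ne (ne_of_mem_of_not_mem hi ha).symm, Finset.prod_insert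
      (fun h => ha (Finset.erase_subset _ _ h))]
    ring

lemma my_pderiv_det {σ R n : Type*} [CommRing R] [Fintype n] [DecidableEq n] (w : σ)
    (M : Matrix n n (MvPolynomial σ R)) :
    pderiv w M.det = ∑ i, (M.updateRow i fun j => pderiv w (M i j)).det := by
  have key : ∀ (i : n) (τ : Equiv.Perm n),
      (∏ j, (M.updateRow i fun j' => pderiv w (M i j')) (τ j) j)
        = pderiv w (M i (τ.symm i)) * ∏ k ∈ Finset.univ.erase (τ.symm i), M (τ k) k := by
    intro i τ
    rw [← Finset.mul_prod_erase Finset.univ _ (Finset.mem_univ (τ.symm i))]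
    congr 1
    · rw [show τ (τ.symm i) = i from τ.apply_symm_apply i, Matrix.updateRow_self]
    · refine Finset.prod_congr rfl fun k hk => ?_
      have hk' : τ k ≠ i := fun h => (Finset.mem_erase.1 hk).1 (by
        simpa using congrArg τ.symm h)
      rw [Matrix.updateRow_ne hk']
  simp_rw [Matrix.det_apply, key, map_sum, Units.smul_def, map_zsmul, my_pderiv_prod]
  rw [Finset.sum_comm]
  refine Finset.sum_congr rfl fun τ _ => ?_
  rw [← Finset.smul_sum]
  congr 1
  rw [← Equiv.sum_comp τ (fun x =>
    pderiv w (M x (τ.symm x)) * ∏ k ∈ Finset.univ.erase (τ.symm x), M (τ k) k)]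
  simp [Equiv.symm_apply_apply]

/-- The `(g,h)` entry of the adjugate of the Frobenius matrix `(a_{g h⁻¹})` equals
`(1/n)` times the partial derivative `∂Θ(G)/∂X_{h g⁻¹}` of the group determinant,
evaluated at the point `(a_g)_{g ∈ G}`, where `n = |G|`. -/
theorem adjugate_frobeniusMatrix_entry
    (G : Type*) [Group G] [Fintype G] [DecidableEq G] (a : G → ℂ) (g h : G) :
    Matrix.adjugate (Matrix.of fun g' h' : G => a (g' * h'⁻¹)) g h =
      (1 / (Fintype.card G : ℂ)) *
        MvPolynomial.eval a
          (MvPolynomial.pderiv (h * g⁻¹)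
            (Matrix.det
              (Matrix.of fun g' h' : G => (MvPolynomial.X (g' * h'⁻¹) : MvPolynomial G ℂ)))) := by
  set M : Matrix G G ℂ := Matrix.of fun g' h' : G => a (g' * h'⁻¹) with hM
  set P : Matrix G G (MvPolynomial G ℂ) :=
    Matrix.of fun g' h' : G => (X (g' * h'⁻¹) : MvPolynomial G ℂ) with hP
  set w : G := h * g⁻¹ with hw
  -- translation invariance of the adjugate
  have inv : ∀ x y k : G, Matrix.adjugate M (x * k) (y * k) = Matrix.adjugate M x y := by
    intro x y k
    have hsub : M.submatrix (Equiv.mulRight k) (Equiv.mulRight k) = M := by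
      ext x' y'
      simp only [Matrix.submatrix_apply, Equiv.coe_mulRight, hM, Matrix.of_apply]
      congr 1
      group
    conv_rhs => rw [← hsub, Matrix.adjugate_submatrix_equiv_self]
    simp [Matrix.submatrix_apply]
  -- the derivative of each row
  have hrow : ∀ i : G, (fun j => pderiv w (P i j)) = Pi.single (w⁻¹ * i)
      (1 : MvPolynomial G ℂ) := by
    intro i
    funext j
    rw [hP, Matrix.of_apply, pderiv_X, Pi.single_apply, Pi.single_apply]
    congr 1
    simp only [eq_iff_iff]
    constructor
    · intro hij; rw [← hij]; group
    · intro hij; rw [hij]; group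
  have h1 : pderiv w P.det = ∑ i : G, Matrix.adjugate P (w⁻¹ * i) i := by
    rw [my_pderiv_det]
    refine Finset.sum_congr rfl fun i _ => ?_
    rw [Matrix.adjugate_apply, hrow i]
  have h2 : (eval a : MvPolynomial G ℂ →+* ℂ).mapMatrix P = M := by
    ext x y
    simp [hP, hM]
  have h3 : eval a (pderiv w P.det) = ∑ i : G, Matrix.adjugate M (w⁻¹ * i) i := by
    rw [h1, map_sum]
    refine Finset.sum_congr rfl fun i _ => ?_
    have hmap := (eval a : MvPolynomial G ℂ →+* ℂ).map_adjugate P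
    rw [h2] at hmap
    calc eval a (Matrix.adjugate P (w⁻¹ * i) i)
        = ((eval a : MvPolynomial G ℂ →+* ℂ).mapMatrix (Matrix.adjugate P)) (w⁻¹ * i) i := rfl
      _ = Matrix.adjugate M (w⁻¹ * i) i := by rw [hmap]
  have h4 : ∀ i : G, Matrix.adjugate M (w⁻¹ * i) i = Matrix.adjugate M g h := by
    intro i
    have := inv g h (h⁻¹ * i)
    rw [← this]
    congr 1
    · rw [hw]; group
    · group
  have h5 : eval a (pderiv w P.det) = (Fintype.card G : ℂ) * Matrix.adjugate M g h := by
    rw [h3]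
    simp [h4, Finset.sum_const, nsmul_eq_mul, Finset.card_univ]
  rw [h5]
  have hcard : (Fintype.card G : ℂ) ≠ 0 := by
    exact_mod_cast Nat.cast_ne_zero.mpr Fintype.card_ne_zero
  field_simp
end

section
/- Let n ≥ 3. There is no affine subspace of ℂⁿ of dimension n−2 entirely contained in the affine hypersurface {(x_1,…,x_n) ∈ ℂⁿ : x_1x_2⋯x_n = 1}. Equivalently, for every point p ∈ ℂⁿ with p_1⋯p_n = 1 and every linearly independent family of n−2 vectors v_1,…,v_{n−2} ∈ ℂⁿ, there exist scalars λ_1,…,λ_{n−2} ∈ ℂ such that the product of the coordinates of p + λ_1 v_1 + ⋯ + λ_{n−2} v_{n−2} is not equal to 1. -/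
/-- For `n ≥ 3`, no affine subspace of `ℂⁿ` of dimension `n − 2` is contained in the
hypersurface `x₁ x₂ ⋯ xₙ = 1`: for any point `p` with `∏ pᵢ = 1` and any linearly
independent family `v₁, …, v_{n−2}`, some point `p + ∑ λⱼ vⱼ` has coordinate product
different from `1`. -/
theorem no_affine_subspace_in_hypersurface (n : ℕ) (hn : 3 ≤ n)
    (p : Fin n → ℂ) (hp : ∏ i : Fin n, p i = 1)
    (v : Fin (n - 2) → Fin n → ℂ) (hv : LinearIndependent ℂ v) :
    ∃ lam : Fin (n - 2) → ℂ,
      ∏ i : Fin n, (p i + ∑ j : Fin (n - 2), lam j * v j i) ≠ 1 := by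
  have h1 : 1 ≤ n - 2 := by omega
  have j0 : Fin (n - 2) := ⟨0, by omega⟩
  have hvj : v j0 ≠ 0 := hv.ne_zero j0
  obtain ⟨i0, hi0⟩ : ∃ i, v j0 i ≠ 0 := by
    by_contra h
    push_neg at h
    exact hvj (funext h)
  refine ⟨fun j => if j = j0 then -p i0 / v j0 i0 else 0, ?_⟩
  have hsum : ∑ j : Fin (n - 2), (if j = j0 then -p i0 / v j0 i0 else 0) * v j i0
      = -p i0 := by
    rw [Finset.sum_eq_single j0]
    · simp [div_mul_cancel₀ _ hi0]
    · intro b _ hb; simp [hb]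
    · intro h; exact absurd (Finset.mem_univ j0) h
  have : ∏ i : Fin n, (p i + ∑ j : Fin (n - 2), (if j = j0 then -p i0 / v j0 i0 else 0) * v j i) = 0 := by
    apply Finset.prod_eq_zero (Finset.mem_univ i0)
    rw [hsum]; ring
  rw [this]; exact zero_ne_one
end

section
/- Let f be a Schwartz function on ℝ³ and define ψ : ℝ⁴ → ℝ (in the coordinates (α_1, α_2, β_1, β_2)) by the John transform ψ(α_1,α_2,β_1,β_2) = ∫_{−∞}^{+∞} f(α_1 s + β_1, α_2 s + β_2, s) ds. Then ψ satisfies the ultrahyperbolic equation ∂²ψ/∂α_1∂β_2 = ∂²ψ/∂α_2∂β_1 at every point of ℝ⁴, where the mixed second partial derivatives are iterated directional derivatives along the corresponding coordinate directions. -/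
open MeasureTheory

namespace JohnAux

noncomputable section

/-- The linear part in `s` of the John line map. -/
def Amap : (Fin 4 → ℝ) →L[ℝ] (Fin 3 → ℝ) :=
  ContinuousLinearMap.pi ![ContinuousLinearMap.proj 0, ContinuousLinearMap.proj 1, 0]

def Bmap : (Fin 4 → ℝ) →L[ℝ] (Fin 3 → ℝ) :=
  ContinuousLinearMap.pi ![ContinuousLinearMap.proj 2, ContinuousLinearMap.proj 3, 0]

def eM (s : ℝ) : (Fin 4 → ℝ) →L[ℝ] (Fin 3 → ℝ) := s • Amap + Bmap

def v (w : Fin 4 → ℝ) (s : ℝ) : Fin 3 → ℝ := ![w 0 * s + w 2, w 1 * s + w 3, s]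

lemma eM_apply (s : ℝ) (u : Fin 4 → ℝ) :
    eM s u = ![u 0 * s + u 2, u 1 * s + u 3, 0] := by
  funext i
  fin_cases i <;>
    simp [eM, Amap, Bmap, ContinuousLinearMap.pi_apply] <;> ring

lemma v_eq (w : Fin 4 → ℝ) (s : ℝ) : v w s = eM s w + ![(0:ℝ), 0, s] := by
  funext i
  rw [eM_apply]
  fin_cases i <;> simp [v]

lemma hasFDerivAt_v (s : ℝ) (w : Fin 4 → ℝ) :
    HasFDerivAt (fun y => v y s) (eM s) w := by
  have : (fun y : Fin 4 → ℝ => v y s) = fun y => eM s y + ![(0:ℝ), 0, s] := by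
    funext y; exact v_eq y s
  rw [this]
  exact (eM s).hasFDerivAt.add_const _

lemma continuous_v (w : Fin 4 → ℝ) : Continuous fun s => v w s := by
  have : (fun s => v w s) = fun s => eM s w + ![(0:ℝ), 0, s] := by
    funext s; exact v_eq w s
  rw [this]
  have h1 : Continuous fun s : ℝ => eM s := by
    unfold eM
    exact (continuous_id.smul continuous_const).add continuous_const
  have h2 : Continuous fun s : ℝ => eM s w :=
    (ContinuousLinearMap.apply ℝ (Fin 3 → ℝ) w).continuous.comp h1
  apply h2.add
  apply continuous_pi
  intro i
  fin_cases i <;> simp <;> fun_prop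

lemma abs_le_norm_v (w : Fin 4 → ℝ) (s : ℝ) : |s| ≤ ‖v w s‖ := by
  have h : v w s 2 = s := rfl
  have := norm_le_pi_norm (v w s) 2
  rwa [h, Real.norm_eq_abs] at this

lemma norm_eM_le (s : ℝ) : ‖eM s‖ ≤ 1 + |s| := by
  apply ContinuousLinearMap.opNorm_le_bound _ (by positivity)
  intro u
  rw [eM_apply]
  have hb : 0 ≤ (1 + |s|) * ‖u‖ := by positivity
  rw [pi_norm_le_iff_of_nonneg hb]
  intro i
  have h0 := norm_le_pi_norm u 0
  have h1 := norm_le_pi_norm u 1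
  have h2 := norm_le_pi_norm u 2
  have h3 := norm_le_pi_norm u 3
  simp only [Real.norm_eq_abs] at h0 h1 h2 h3
  fin_cases i <;> simp [Real.norm_eq_abs]
  · calc |u 0 * s + u 2| ≤ |u 0 * s| + |u 2| := abs_add_le _ _
      _ = |u 0| * |s| + |u 2| := by rw [abs_mul]
      _ ≤ ‖u‖ * |s| + ‖u‖ := by gcongr
      _ = (1 + |s|) * ‖u‖ := by ring
  · calc |u 1 * s + u 3| ≤ |u 1 * s| + |u 3| := abs_add_le _ _
      _ = |u 1| * |s| + |u 3| := by rw [abs_mul]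
      _ ≤ ‖u‖ * |s| + ‖u‖ := by gcongr
      _ = (1 + |s|) * ‖u‖ := by ring
  · positivity

/-- Cubic decay for a Schwartz function along John lines, uniform in `w`. -/
lemma decay3 {F : Type*} [NormedAddCommGroup F] [NormedSpace ℝ F]
    (g : SchwartzMap (Fin 3 → ℝ) F) :
    ∃ C, 0 ≤ C ∧ ∀ (w : Fin 4 → ℝ) (s : ℝ), ‖g (v w s)‖ ≤ C * ((1 + |s|) ^ 3)⁻¹ := by
  set C : ℝ := 2 ^ 3 * (Finset.Iic ((3 : ℕ), (0 : ℕ))).sup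
      (fun m => SchwartzMap.seminorm ℝ m.1 m.2) g with hC
  refine ⟨C, ?_, ?_⟩
  · have := apply_nonneg ((Finset.Iic ((3 : ℕ), (0 : ℕ))).sup
      (fun m => SchwartzMap.seminorm ℝ (F := F) m.1 m.2)) g
    positivity
  · intro w s
    have key := SchwartzMap.one_add_le_sup_seminorm_apply (𝕜 := ℝ)
      (m := ((3 : ℕ), (0 : ℕ))) (k := 3) (n := 0) le_rfl le_rfl g (v w s)
    rw [norm_iteratedFDeriv_zero] at key
    have h1 : (0:ℝ) < (1 + |s|) ^ 3 := by positivity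
    have h2 : (1 + |s|) ^ 3 * ‖g (v w s)‖ ≤ C := by
      refine le_trans (mul_le_mul_of_nonneg_right ?_ (norm_nonneg _)) key
      have := abs_le_norm_v w s
      gcongr
    rw [show C * ((1 + |s|) ^ 3)⁻¹ = C / (1 + |s|) ^ 3 from (div_eq_mul_inv C _).symm]
    rw [le_div_iff₀ h1]
    linarith

lemma integrable_inv_sq (C : ℝ) :
    Integrable (fun s : ℝ => C * ((1 + |s|) ^ 2)⁻¹) := by
  have h : Integrable (fun s : ℝ => (1 + ‖s‖) ^ (-(2:ℝ))) volume :=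
    integrable_one_add_norm (by norm_num)
  have heq : (fun s : ℝ => C * ((1 + |s|) ^ 2)⁻¹)
      = fun s : ℝ => C * (1 + ‖s‖) ^ (-(2:ℝ)) := by
    funext s
    rw [Real.norm_eq_abs, Real.rpow_neg (by positivity),
      show ((2:ℝ)) = ((2:ℕ):ℝ) by norm_num, Real.rpow_natCast]
  rw [heq]
  exact h.const_mul C

lemma inv3_le_inv2 (s : ℝ) : ((1 + |s|) ^ 3)⁻¹ ≤ ((1 + |s|) ^ 2)⁻¹ := by
  have h1 : (0:ℝ) < (1 + |s|) ^ 2 := by positivity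
  have h2 : (1 + |s|) ^ 2 ≤ (1 + |s|) ^ 3 :=
    pow_le_pow_right₀ (by linarith [abs_nonneg s]) (by norm_num)
  exact inv_anti₀ h1 h2

lemma continuous_eM : Continuous fun s : ℝ => eM s := by
  unfold eM
  exact (continuous_id.smul continuous_const).add continuous_const

lemma continuous_fderiv_comp (g : SchwartzMap (Fin 3 → ℝ) ℝ) (y : Fin 4 → ℝ) :
    Continuous fun s : ℝ => (fderiv ℝ g (v y s)).comp (eM s) := by
  have h1 : Continuous fun s : ℝ => fderiv ℝ g (v y s) :=
    ((g.smooth ⊤).continuous_fderiv (by simp)).comp (continuous_v y)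
  exact h1.clm_comp continuous_eM

lemma norm_fderiv_comp_le (g : SchwartzMap (Fin 3 → ℝ) ℝ) {C : ℝ}
    (hC : ∀ (w : Fin 4 → ℝ) (s : ℝ),
      ‖(SchwartzMap.fderivCLM ℝ (Fin 3 → ℝ) ℝ g) (v w s)‖ ≤ C * ((1 + |s|) ^ 3)⁻¹)
    (y : Fin 4 → ℝ) (s : ℝ) :
    ‖(fderiv ℝ g (v y s)).comp (eM s)‖ ≤ C * ((1 + |s|) ^ 2)⁻¹ := by
  have hC0 : 0 ≤ C := by
    have := (norm_nonneg ((SchwartzMap.fderivCLM ℝ (Fin 3 → ℝ) ℝ g) (v y s))).trans (hC y s)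
    nlinarith [abs_nonneg s, pow_pos (show (0:ℝ) < 1 + |s| by positivity) 3,
      inv_pos.mpr (pow_pos (show (0:ℝ) < 1 + |s| by positivity) 3)]
  calc ‖(fderiv ℝ g (v y s)).comp (eM s)‖
      ≤ ‖fderiv ℝ g (v y s)‖ * ‖eM s‖ := ContinuousLinearMap.opNorm_comp_le _ _
    _ ≤ (C * ((1 + |s|) ^ 3)⁻¹) * (1 + |s|) := by
        have h1 := hC y s
        rw [SchwartzMap.fderivCLM_apply] at h1
        have h2 := norm_eM_le s
        have h3 : (0:ℝ) ≤ C * ((1 + |s|) ^ 3)⁻¹ := by positivity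
        exact mul_le_mul h1 h2 (norm_nonneg _) h3
    _ = C * ((1 + |s|) ^ 2)⁻¹ := by
        have h1 : (0:ℝ) < 1 + |s| := by positivity
        field_simp

lemma integrable_fderiv_comp (g : SchwartzMap (Fin 3 → ℝ) ℝ) (y : Fin 4 → ℝ) :
    Integrable (fun s : ℝ => (fderiv ℝ g (v y s)).comp (eM s)) := by
  obtain ⟨C, hC0, hC⟩ := decay3 (SchwartzMap.fderivCLM ℝ (Fin 3 → ℝ) ℝ g)
  refine (integrable_inv_sq C).mono'
    (continuous_fderiv_comp g y).aestronglyMeasurable ?_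
  filter_upwards with s
  exact norm_fderiv_comp_le g hC y s

lemma integrable_comp_v (g : SchwartzMap (Fin 3 → ℝ) ℝ) (y : Fin 4 → ℝ) :
    Integrable (fun s : ℝ => g (v y s)) := by
  obtain ⟨C, hC0, hC⟩ := decay3 g
  refine (integrable_inv_sq C).mono'
    (g.continuous.comp (continuous_v y)).aestronglyMeasurable ?_
  filter_upwards with s
  calc ‖g (v y s)‖ ≤ C * ((1 + |s|) ^ 3)⁻¹ := hC y s
    _ ≤ C * ((1 + |s|) ^ 2)⁻¹ := by
        exact mul_le_mul_of_nonneg_left (inv3_le_inv2 s) hC0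

lemma hasFDerivAt_john (g : SchwartzMap (Fin 3 → ℝ) ℝ) (w : Fin 4 → ℝ) :
    HasFDerivAt (fun y : Fin 4 → ℝ => ∫ s : ℝ, g (v y s))
      (∫ s : ℝ, (fderiv ℝ g (v w s)).comp (eM s)) w := by
  obtain ⟨C, hC0, hC⟩ := decay3 (SchwartzMap.fderivCLM ℝ (Fin 3 → ℝ) ℝ g)
  apply hasFDerivAt_integral_of_dominated_of_fderiv_le
    (F' := fun (x : Fin 4 → ℝ) (s : ℝ) => (fderiv ℝ g (v x s)).comp (eM s))
    (bound := fun s : ℝ => C * ((1 + |s|) ^ 2)⁻¹) (s := Set.univ) Filter.univ_mem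
  · filter_upwards with x
    exact (g.continuous.comp (continuous_v x)).aestronglyMeasurable
  · exact integrable_comp_v g w
  · exact (continuous_fderiv_comp g w).aestronglyMeasurable
  · filter_upwards with s
    intro x _
    exact norm_fderiv_comp_le g hC x s
  · exact integrable_inv_sq C
  · filter_upwards with s
    intro x _
    exact (g.differentiableAt.hasFDerivAt).comp x (hasFDerivAt_v s x)

lemma symm_step (f : SchwartzMap (Fin 3 → ℝ) ℝ) (x : Fin 3 → ℝ) (s : ℝ) :
    fderiv ℝ (LineDeriv.lineDerivOp (![0,1,0] : Fin 3 → ℝ) f) x ![s,0,0]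
      = fderiv ℝ (LineDeriv.lineDerivOp (![1,0,0] : Fin 3 → ℝ) f) x ![0,s,0] := by
  have hd : Differentiable ℝ (fderiv ℝ f) :=
    ((f.smooth ⊤).fderiv_right (m := 1) (by decide)).differentiable one_ne_zero
  have hsym := second_derivative_symmetric (f := ⇑f) (f' := fderiv ℝ f)
    (f'' := fderiv ℝ (fderiv ℝ f) x) (fun y => f.differentiableAt.hasFDerivAt)
    (hd x).hasFDerivAt
  have hpd : ∀ (m : Fin 3 → ℝ), HasFDerivAt (fun z => fderiv ℝ f z m)
      ((ContinuousLinearMap.apply ℝ ℝ m).comp (fderiv ℝ (fderiv ℝ f) x)) x := fun m =>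
    ((ContinuousLinearMap.apply ℝ ℝ m).hasFDerivAt).comp x (hd x).hasFDerivAt
  have e1 : ⇑(LineDeriv.lineDerivOp (![0,1,0] : Fin 3 → ℝ) f)
      = fun z => fderiv ℝ f z ![0,1,0] := rfl
  have e2 : ⇑(LineDeriv.lineDerivOp (![1,0,0] : Fin 3 → ℝ) f)
      = fun z => fderiv ℝ f z ![1,0,0] := rfl
  rw [e1, e2, (hpd _).fderiv, (hpd _).fderiv]
  have h1 : (![s,0,0] : Fin 3 → ℝ) = s • ![1,0,0] := by
    funext i; fin_cases i <;> simp
  have h2 : (![0,s,0] : Fin 3 → ℝ) = s • ![0,1,0] := by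
    funext i; fin_cases i <;> simp
  rw [h1, h2]
  simp only [ContinuousLinearMap.comp_apply, ContinuousLinearMap.apply_apply,
    _root_.map_smul, ContinuousLinearMap.smul_apply]
  rw [hsym]

lemma eM_single (s : ℝ) :
    eM s (Pi.single (3 : Fin 4) (1:ℝ)) = ![0,1,0]
    ∧ eM s (Pi.single (2 : Fin 4) (1:ℝ)) = ![1,0,0]
    ∧ eM s (Pi.single (0 : Fin 4) (1:ℝ)) = ![s,0,0]
    ∧ eM s (Pi.single (1 : Fin 4) (1:ℝ)) = ![0,s,0] := by
  refine ⟨?_, ?_, ?_, ?_⟩ <;>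
  · rw [eM_apply]
    funext i
    fin_cases i <;> simp (config := { decide := true }) [Pi.single_apply]

lemma fderiv_john_apply (g : SchwartzMap (Fin 3 → ℝ) ℝ) (y : Fin 4 → ℝ)
    (u : Fin 4 → ℝ) :
    fderiv ℝ (fun y : Fin 4 → ℝ => ∫ s : ℝ, g (v y s)) y u
      = ∫ s : ℝ, fderiv ℝ g (v y s) (eM s u) := by
  rw [(hasFDerivAt_john g y).fderiv,
    ContinuousLinearMap.integral_apply (integrable_fderiv_comp g y) u]
  rfl

end

end JohnAux

open JohnAux in
/-- **John's transform solves the ultrahyperbolic equation.** For a Schwartz function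
`f` on `ℝ³`, the John transform
`ψ(α₁,α₂,β₁,β₂) = ∫ f(α₁ s + β₁, α₂ s + β₂, s) ds` (with `ℝ⁴` coordinatized as
`w = (α₁, α₂, β₁, β₂) = (w 0, w 1, w 2, w 3)`) satisfies
`∂²ψ/∂α₁∂β₂ = ∂²ψ/∂α₂∂β₁` at every point, where the second mixed partials are iterated
directional derivatives along the coordinate directions. -/
theorem john_transform_ultrahyperbolic
    (f : SchwartzMap (Fin 3 → ℝ) ℝ)
    (ψ : (Fin 4 → ℝ) → ℝ)
    (hψ : ∀ w : Fin 4 → ℝ,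
      ψ w = ∫ s : ℝ, f ![w 0 * s + w 2, w 1 * s + w 3, s])
    (w : Fin 4 → ℝ) :
    fderiv ℝ (fun y : Fin 4 → ℝ => fderiv ℝ ψ y (Pi.single 3 1)) w (Pi.single 0 1) =
      fderiv ℝ (fun y : Fin 4 → ℝ => fderiv ℝ ψ y (Pi.single 2 1)) w (Pi.single 1 1) := by
  have hψ' : ψ = fun y => ∫ s : ℝ, f (v y s) := by
    funext y; exact hψ y
  set g2 := LineDeriv.lineDerivOp (![0,1,0] : Fin 3 → ℝ) f with hg2
  set g1 := LineDeriv.lineDerivOp (![1,0,0] : Fin 3 → ℝ) f with hg1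
  have step2 : (fun y => fderiv ℝ ψ y (Pi.single 3 1))
      = fun y => ∫ s : ℝ, g2 (v y s) := by
    funext y
    rw [hψ', fderiv_john_apply f y]
    have h : (fun s : ℝ => fderiv ℝ f (v y s) (eM s (Pi.single 3 1)))
        = fun s : ℝ => g2 (v y s) := by
      funext s; rw [(eM_single s).1]; rfl
    rw [h]
  have step1 : (fun y => fderiv ℝ ψ y (Pi.single 2 1))
      = fun y => ∫ s : ℝ, g1 (v y s) := by
    funext y
    rw [hψ', fderiv_john_apply f y]
    have h : (fun s : ℝ => fderiv ℝ f (v y s) (eM s (Pi.single 2 1)))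
        = fun s : ℝ => g1 (v y s) := by
      funext s; rw [(eM_single s).2.1]; rfl
    rw [h]
  rw [step2, step1, fderiv_john_apply g2 w (Pi.single 0 1),
    fderiv_john_apply g1 w (Pi.single 1 1)]
  have h : (fun s : ℝ => fderiv ℝ g2 (v w s) (eM s (Pi.single 0 1)))
      = fun s : ℝ => fderiv ℝ g1 (v w s) (eM s (Pi.single 1 1)) := by
    funext s
    rw [(eM_single s).2.2.1, (eM_single s).2.2.2]
    exact symm_step f (v w s) s
  rw [h]
end
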